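/- For s ≥ 2, let G₁, …, Gₛ be graphs on [n] such that the family is 2-star edge-colored K₃-free. Then the sum of the numbers of edges of the Gᵢ is at most s·⌊n²/4⌋. -/

import Mathlib

open Finset

/-- Degree of a vertex in a 3-graph. -/
def degH {n : ℕ} (H : Finset (Finset (Fin n))) (v : Fin n) : ℕ :=
  (H.filter (fun e => v ∈ e)).card

/-- `H` is a 3-uniform hypergraph. -/
def Uniform3 {n : ℕ} (H : Finset (Finset (Fin n))) : Prop :=
  ∀ e ∈ H, e.card = 3

/-- The matching number of `H` is at most `s`. -/
def MatchingAtMost {n : ℕ} (H : Finset (Finset (Fin n))) (s : ℕ) : Prop :=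
  ∀ M ⊆ H, (M : Set (Finset (Fin n))).Pairwise (fun e f => Disjoint e f) → M.card ≤ s

/-- `H` contains a copy of the hypergraph with edge set `F`. -/
def HasCopy {α : Type*} [DecidableEq α] {n : ℕ}
    (F : Set (Finset α)) (H : Finset (Finset (Fin n))) : Prop :=
  ∃ f : α → Fin n, Function.Injective f ∧ ∀ e ∈ F, e.image f ∈ H

/-- Number of edges of the Turán graph `T(n, r)`. -/
def turanEdges (n r : ℕ) : ℕ := (SimpleGraph.turanGraph n r).edgeFinset.card

/-- The family `G` of graphs (colors) contains no `k`-star edge-colored `K_r`: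
no `r` distinct vertices together with a symmetric coloring of the pairs such that
each pair is an edge in its color, exactly `k` colors are used, and each color
class forms a star. -/
def StarColoredCliqueFree (k r : ℕ) {n s : ℕ} (G : Fin s → SimpleGraph (Fin n)) : Prop :=
  ¬ ∃ (f : Fin r → Fin n) (c : Fin r → Fin r → Fin s),
      Function.Injective f ∧
      (∀ i j, c i j = c j i) ∧
      (∀ i j, i ≠ j → (G (c i j)).Adj (f i) (f j)) ∧
      ((Finset.univ.filter (fun p : Fin r × Fin r => p.1 ≠ p.2)).image
        (fun p => c p.1 p.2)).card = k ∧
      (∀ a : Fin s, ∃ v : Fin r, ∀ i j, i ≠ j → c i j = a → i = v ∨ j = v)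


def PO {n : ℕ} (R : Fin n → Fin n → Prop) [DecidableRel R] (V : Finset (Fin n)) :
    Finset (Fin n × Fin n) :=
  (V ×ˢ V).filter (fun p => p.1 < p.2 ∧ R p.1 p.2)

lemma sq_div_four_step {m : ℕ} (hm : 2 ≤ m) : m ^ 2 / 4 = (m - 2) ^ 2 / 4 + (m - 1) := by
  obtain ⟨t, rfl⟩ : ∃ t, m = t + 2 := ⟨m - 2, by omega⟩
  have h2 : (t + 2) ^ 2 = t ^ 2 + 4 * (t + 1) := by ring
  have h3 : (t + 2) - 2 = t := by omega
  rw [h3, h2]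
  generalize t ^ 2 = a
  omega

lemma key {n : ℕ} (U D : Fin n → Fin n → Prop) [DecidableRel U] [DecidableRel D]
    (hUs : ∀ u v, U u v → U v u) (hDs : ∀ u v, D u v → D v u)
    (hDU : ∀ u v, D u v → U u v) (hUi : ∀ u, ¬ U u u)
    (htri : ∀ u v w, D u v → U u w → U v w → False) :
    ∀ (V : Finset (Fin n)), (PO U V).card + (PO D V).card ≤ 2 * (V.card ^ 2 / 4) := by
  suffices H : ∀ k (V : Finset (Fin n)), V.card ≤ k →
      (PO U V).card + (PO D V).card ≤ 2 * (V.card ^ 2 / 4) by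
    exact fun V => H V.card V le_rfl
  intro k
  induction k with
  | zero =>
    intro V hV
    have hV0 : V = ∅ := card_eq_zero.mp (Nat.le_zero.mp hV)
    subst hV0
    simp [PO]
  | succ k ih =>
    intro V hV
    by_cases hD : PO D V = ∅
    · -- no D-edges: crude bound
      rw [hD]
      simp only [card_empty, add_zero]
      have hsub : PO U V ⊆ (V ×ˢ V).filter (fun p => p.1 < p.2) := by
        intro p hp
        simp only [PO, mem_filter] at hp ⊢
        exact ⟨hp.1, hp.2.1⟩
      have hswap : ((V ×ˢ V).filter (fun p : Fin n × Fin n => p.1 < p.2)).card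
          = ((V ×ˢ V).filter (fun p : Fin n × Fin n => p.2 < p.1)).card := by
        apply Finset.card_nbij' (fun p => (p.2, p.1)) (fun p => (p.2, p.1)) <;>
          simp +contextual [mem_product, and_comm, Set.MapsTo, Set.LeftInvOn, Set.RightInvOn]
      have hdisj : Disjoint ((V ×ˢ V).filter (fun p : Fin n × Fin n => p.1 < p.2))
          ((V ×ˢ V).filter (fun p : Fin n × Fin n => p.2 < p.1)) := by
        rw [disjoint_filter]
        intro x _ h1 h2
        exact absurd (lt_trans h1 h2) (lt_irrefl _)
      have hun : ((V ×ˢ V).filter (fun p : Fin n × Fin n => p.1 < p.2)) ∪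
          ((V ×ˢ V).filter (fun p : Fin n × Fin n => p.2 < p.1)) ⊆ V ×ˢ V :=
        union_subset (filter_subset _ _) (filter_subset _ _)
      have h2 := card_le_card hun
      rw [card_union_of_disjoint hdisj, card_product] at h2
      have hle := card_le_card hsub
      have hVsq : V.card * V.card = V.card ^ 2 := (sq V.card).symm
      have hsq : V.card ^ 2 % 4 ≤ 1 := by
        rcases Nat.even_or_odd V.card with ⟨t, ht⟩ | ⟨t, ht⟩
        · rw [ht]; have h : (t + t) ^ 2 = 4 * t ^ 2 := by ring
          rw [h]; omega
        · rw [ht]; have h : (2 * t + 1) ^ 2 = 4 * (t ^ 2 + t) + 1 := by ring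
          rw [h]; omega
      omega
    · -- pick a D-edge (u,v)
      obtain ⟨p, hp⟩ := Finset.nonempty_iff_ne_empty.mpr hD
      simp only [PO, mem_filter, mem_product] at hp
      obtain ⟨⟨hu, hv⟩, hlt, hduv⟩ := hp
      set u := p.1 with hu_def
      set v := p.2 with hv_def
      have hne : u ≠ v := ne_of_lt hlt
      have hUuv : U u v := hDU _ _ hduv
      set V' := V \ {u, v} with hV'
      have hsubuv : ({u, v} : Finset (Fin n)) ⊆ V := by
        intro x hx; simp at hx; rcases hx with rfl | rfl <;> assumption
      have hVcard2 : 2 ≤ V.card := by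
        calc 2 = ({u, v} : Finset (Fin n)).card := (card_pair hne).symm
          _ ≤ V.card := card_le_card hsubuv
      have hV'card : V'.card = V.card - 2 := by
        rw [hV', card_sdiff_of_subset hsubuv, card_pair hne]
      -- incident-edge bound for any symmetric R ≤ U with R u v
      have main : ∀ (R : Fin n → Fin n → Prop), ∀ _ : DecidableRel R,
          (∀ a b, R a b → R b a) → (∀ a b, R a b → U a b) → R u v →
          ((PO R V).filter (fun q => q.1 = u ∨ q.2 = u ∨ q.1 = v ∨ q.2 = v)).card
            ≤ V.card - 1 := by
        intro R _ hRs hRU hRuv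
        set N₁ := V.filter (fun w => R u w) with hN₁
        set N₂ := V.filter (fun w => R v w ∧ w ≠ u) with hN₂
        have hdisjN : Disjoint N₁ N₂ := by
          rw [Finset.disjoint_left]
          intro w hw1 hw2
          simp only [hN₁, hN₂, mem_filter] at hw1 hw2
          exact htri u v w hduv (hRU _ _ hw1.2) (hRU _ _ hw2.2.1)
        have hNnu : ∀ w ∈ N₁ ∪ N₂, w ≠ u := by
          intro w hw
          simp only [hN₁, hN₂, mem_union, mem_filter] at hw
          rintro rfl
          rcases hw with h | h
          · exact hUi u (hRU _ _ h.2)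
          · exact h.2.2 rfl
        have hcardN : N₁.card + N₂.card ≤ V.card - 1 := by
          rw [← card_union_of_disjoint hdisjN]
          have hsub2 : N₁ ∪ N₂ ⊆ V.erase u := by
            intro w hw
            rw [mem_erase]
            refine ⟨hNnu w hw, ?_⟩
            rcases mem_union.mp hw with h | h
            · exact mem_of_mem_filter _ h
            · exact mem_of_mem_filter _ h
          calc (N₁ ∪ N₂).card ≤ (V.erase u).card := card_le_card hsub2
            _ = V.card - 1 := card_erase_of_mem hu
        set Inc := (PO R V).filter (fun q => q.1 = u ∨ q.2 = u ∨ q.1 = v ∨ q.2 = v) with hInc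
        set P₁ := Inc.filter (fun q => q.1 = u ∨ q.2 = u) with hP₁
        set P₂ := Inc.filter (fun q => ¬(q.1 = u ∨ q.2 = u)) with hP₂
        have hsplit : P₁.card + P₂.card = Inc.card :=
          card_filter_add_card_filter_not _
        have hmemP₁ : ∀ q ∈ P₁, q.1 ∈ V ∧ q.2 ∈ V ∧ q.1 < q.2 ∧ R q.1 q.2
            ∧ (q.1 = u ∨ q.2 = u) := by
          intro q hq
          simp only [hP₁, hInc, PO, mem_filter, mem_product] at hq
          exact ⟨hq.1.1.1.1, hq.1.1.1.2, hq.1.1.2.1, hq.1.1.2.2, hq.2⟩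
        have hmemP₂ : ∀ q ∈ P₂, q.1 ∈ V ∧ q.2 ∈ V ∧ q.1 < q.2 ∧ R q.1 q.2
            ∧ (q.1 = v ∨ q.2 = v) ∧ q.1 ≠ u ∧ q.2 ≠ u := by
          intro q hq
          simp only [hP₂, hInc, PO, mem_filter, mem_product] at hq
          push_neg at hq
          refine ⟨hq.1.1.1.1, hq.1.1.1.2, hq.1.1.2.1, hq.1.1.2.2, ?_, hq.2.1, hq.2.2⟩
          rcases hq.1.2 with h | h | h | h
          · exact absurd h hq.2.1
          · exact absurd h hq.2.2
          · exact Or.inl h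
          · exact Or.inr h
        have hc₁ : P₁.card ≤ N₁.card := by
          apply Finset.card_le_card_of_injOn (fun q => if q.1 = u then q.2 else q.1)
          · intro q hq
            obtain ⟨h1, h2, h3, h4, h5⟩ := hmemP₁ q hq
            simp only [hN₁, mem_coe, mem_filter]
            by_cases h : q.1 = u
            · rw [if_pos h]; exact ⟨h2, h ▸ h4⟩
            · rw [if_neg h]
              rcases h5 with h' | h'
              · exact absurd h' h
              · exact ⟨h1, hRs _ _ (h' ▸ h4)⟩
          · intro q1 hq1 q2 hq2 heq
            dsimp only at heq
            obtain ⟨-, -, hlt1, -, hc1⟩ := hmemP₁ q1 hq1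
            obtain ⟨-, -, hlt2, -, hc2⟩ := hmemP₁ q2 hq2
            have hne1 : q1.2 = u → q1.1 ≠ u := by intro h hh; rw [hh, h] at hlt1; exact lt_irrefl _ hlt1
            have hne2 : q2.2 = u → q2.1 ≠ u := by intro h hh; rw [hh, h] at hlt2; exact lt_irrefl _ hlt2
            rcases hc1 with e1 | e1 <;> rcases hc2 with e2 | e2
            · rw [if_pos e1, if_pos e2] at heq
              exact Prod.ext (e1.trans e2.symm) heq
            · rw [if_pos e1, if_neg (hne2 e2)] at heq
              exfalso; rw [e1, heq] at hlt1; rw [e2] at hlt2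
              exact absurd (lt_trans hlt1 hlt2) (lt_irrefl _)
            · rw [if_neg (hne1 e1), if_pos e2] at heq
              exfalso; rw [heq, e1] at hlt1; rw [e2] at hlt2
              exact absurd (lt_trans hlt2 hlt1) (lt_irrefl _)
            · rw [if_neg (hne1 e1), if_neg (hne2 e2)] at heq
              exact Prod.ext heq (e1.trans e2.symm)
        have hc₂ : P₂.card ≤ N₂.card := by
          apply Finset.card_le_card_of_injOn (fun q => if q.1 = v then q.2 else q.1)
          · intro q hq
            obtain ⟨h1, h2, h3, h4, h5, h6, h7⟩ := hmemP₂ q hq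
            simp only [hN₂, mem_coe, mem_filter]
            by_cases h : q.1 = v
            · rw [if_pos h]; exact ⟨h2, h ▸ h4, h7⟩
            · rw [if_neg h]
              rcases h5 with h' | h'
              · exact absurd h' h
              · exact ⟨h1, hRs _ _ (h' ▸ h4), h6⟩
          · intro q1 hq1 q2 hq2 heq
            dsimp only at heq
            obtain ⟨-, -, hlt1, -, hc1, -, -⟩ := hmemP₂ q1 hq1
            obtain ⟨-, -, hlt2, -, hc2, -, -⟩ := hmemP₂ q2 hq2
            have hne1 : q1.2 = v → q1.1 ≠ v := by intro h hh; rw [hh, h] at hlt1; exact lt_irrefl _ hlt1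
            have hne2 : q2.2 = v → q2.1 ≠ v := by intro h hh; rw [hh, h] at hlt2; exact lt_irrefl _ hlt2
            rcases hc1 with e1 | e1 <;> rcases hc2 with e2 | e2
            · rw [if_pos e1, if_pos e2] at heq
              exact Prod.ext (e1.trans e2.symm) heq
            · rw [if_pos e1, if_neg (hne2 e2)] at heq
              exfalso; rw [e1, heq] at hlt1; rw [e2] at hlt2
              exact absurd (lt_trans hlt1 hlt2) (lt_irrefl _)
            · rw [if_neg (hne1 e1), if_pos e2] at heq
              exfalso; rw [heq, e1] at hlt1; rw [e2] at hlt2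
              exact absurd (lt_trans hlt2 hlt1) (lt_irrefl _)
            · rw [if_neg (hne1 e1), if_neg (hne2 e2)] at heq
              exact Prod.ext heq (e1.trans e2.symm)
        omega
      -- splitting PO R V into V'-part and incident part
      have split : ∀ (R : Fin n → Fin n → Prop), ∀ _ : DecidableRel R,
          (PO R V).card = (PO R V').card
            + ((PO R V).filter (fun q => q.1 = u ∨ q.2 = u ∨ q.1 = v ∨ q.2 = v)).card := by
        intro R _
        have hEq : PO R V' = (PO R V).filter
            (fun q => ¬(q.1 = u ∨ q.2 = u ∨ q.1 = v ∨ q.2 = v)) := by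
          ext q
          simp only [PO, hV', mem_filter, mem_product, mem_sdiff, mem_insert, mem_singleton]
          constructor
          · rintro ⟨⟨⟨h1, h1'⟩, ⟨h2, h2'⟩⟩, h3, h4⟩
            push_neg at h1' h2' ⊢
            exact ⟨⟨⟨h1, h2⟩, h3, h4⟩, h1'.1, h2'.1, h1'.2, h2'.2⟩
          · rintro ⟨⟨⟨h1, h2⟩, h3, h4⟩, h5⟩
            push_neg at h5
            exact ⟨⟨⟨h1, fun h => by rcases h with h | h; exacts [h5.1 h, h5.2.2.1 h]⟩,
              ⟨h2, fun h => by rcases h with h | h; exacts [h5.2.1 h, h5.2.2.2 h]⟩⟩, h3, h4⟩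
        rw [hEq]
        have h := card_filter_add_card_filter_not (s := PO R V)
          (p := fun q => q.1 = u ∨ q.2 = u ∨ q.1 = v ∨ q.2 = v)
        omega
      have hUinc := main U inferInstance hUs (fun _ _ h => h) hUuv
      have hDinc := main D inferInstance hDs hDU hduv
      have hUsplit := split U inferInstance
      have hDsplit := split D inferInstance
      have hV'le : V'.card ≤ k := by omega
      have hih := ih V' hV'le
      rw [hV'card] at hih
      have harith := sq_div_four_step hVcard2
      omega


lemma po_eq {n : ℕ} (R : Fin n → Fin n → Prop) [DecidableRel R] :
    PO R univ = ((univ ×ˢ univ : Finset (Fin n × Fin n)).filter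
      (fun p => p.1 < p.2)).filter (fun p => R p.1 p.2) := by
  rw [PO, filter_filter]

lemma po_card_edge {n : ℕ} (G : SimpleGraph (Fin n)) [DecidableRel G.Adj] :
    (PO G.Adj univ).card = G.edgeFinset.card := by
  have h2 := SimpleGraph.two_mul_card_edgeFinset (G := G)
  have hsplit := card_filter_add_card_filter_not
    (s := (univ : Finset (Fin n × Fin n)).filter (fun p => G.Adj p.1 p.2))
    (p := fun p => p.1 < p.2)
  have he1 : ((univ : Finset (Fin n × Fin n)).filter (fun p => G.Adj p.1 p.2)).filter
      (fun p => p.1 < p.2) = PO G.Adj univ := by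
    rw [PO, univ_product_univ, filter_filter]
    exact filter_congr (fun p _ => and_comm)
  have he2 : (((univ : Finset (Fin n × Fin n)).filter (fun p => G.Adj p.1 p.2)).filter
      (fun p => ¬ p.1 < p.2)).card = (PO G.Adj univ).card := by
    apply Finset.card_nbij' (fun p => (p.2, p.1)) (fun p => (p.2, p.1))
    · intro p hp
      simp only [mem_coe, mem_filter, mem_univ, true_and] at hp
      obtain ⟨hadj, hnlt⟩ := hp
      have hne : p.2 ≠ p.1 := fun h => G.irrefl (h ▸ hadj)
      simp only [PO, mem_coe, mem_filter, mem_product, mem_univ, true_and]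
      exact ⟨lt_of_le_of_ne (not_lt.mp hnlt) hne, hadj.symm⟩
    · intro p hp
      simp only [PO, mem_coe, mem_filter, mem_product, mem_univ, true_and] at hp
      obtain ⟨hplt, hadj⟩ := hp
      simp only [mem_coe, mem_filter, mem_univ, true_and]
      exact ⟨hadj.symm, not_lt.mpr (le_of_lt hplt)⟩
    · intro p _; rfl
    · intro p _; rfl
  have hconv : ((univ : Finset (Fin n × Fin n)).filter fun (x, y) => G.Adj x y)
      = (univ : Finset (Fin n × Fin n)).filter (fun p => G.Adj p.1 p.2) := by
    apply filter_congr
    rintro ⟨x, y⟩ _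
    exact Iff.rfl
  rw [hconv] at h2
  rw [he1, he2] at hsplit
  omega

lemma po_split {n : ℕ} (A B : Fin n → Fin n → Prop) [DecidableRel A] [DecidableRel B]
    [DecidableRel (fun a b => A a b ∨ B a b)] [DecidableRel (fun a b => A a b ∧ B a b)] :
    (PO A univ).card + (PO B univ).card
      = (PO (fun a b => A a b ∨ B a b) univ).card
        + (PO (fun a b => A a b ∧ B a b) univ).card := by
  rw [po_eq A, po_eq B, po_eq _, po_eq _, Finset.card_filter, Finset.card_filter,
    Finset.card_filter, Finset.card_filter, ← Finset.sum_add_distrib, ← Finset.sum_add_distrib]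
  apply Finset.sum_congr rfl
  intro p _
  by_cases hA : A p.1 p.2 <;> by_cases hB : B p.1 p.2 <;> simp [hA, hB]



lemma cherry {n s : ℕ} (G : Fin s → SimpleGraph (Fin n))
    (hfree : StarColoredCliqueFree 2 3 G) :
    ∀ i j, i ≠ j → ∀ u v w, (G i).Adj u v → (G i).Adj v w → (G j).Adj u w → False := by
  intro i j hij u v w h1 h2 h3
  apply hfree
  refine ⟨fun a => if a = 0 then u else if a = 1 then v else w,
    fun a b => if (a = 0 ∧ b = 2) ∨ (a = 2 ∧ b = 0) then j else i, ?_, ?_, ?_, ?_, ?_⟩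
  · -- injective
    have huv : u ≠ v := (G i).ne_of_adj h1
    have hvw : v ≠ w := (G i).ne_of_adj h2
    have huw : u ≠ w := (G j).ne_of_adj h3
    intro a b hab
    fin_cases a <;> fin_cases b <;> simp_all
  · -- symmetric
    intro a b
    fin_cases a <;> fin_cases b <;> simp [or_comm]
  · -- adjacency
    have h1' := h1.symm
    have h2' := h2.symm
    have h3' := h3.symm
    intro a b hab
    fin_cases a <;> fin_cases b <;> simp_all
  · -- exactly two colors
    have himg : ((Finset.univ.filter (fun p : Fin 3 × Fin 3 => p.1 ≠ p.2)).image
        (fun p => if (p.1 = 0 ∧ p.2 = 2) ∨ (p.1 = 2 ∧ p.2 = 0) then j else i)) = {i, j} := by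
      ext x
      simp only [mem_image, mem_filter, mem_univ, true_and, mem_insert, mem_singleton]
      constructor
      · rintro ⟨p, hp, rfl⟩
        split_ifs <;> simp
      · rintro (rfl | rfl)
        · exact ⟨(0, 1), by decide, by rw [if_neg (by decide)]⟩
        · exact ⟨(0, 2), by decide, by rw [if_pos (by decide)]⟩
    rw [himg, card_insert_of_notMem (by simpa using hij), card_singleton]
  · -- star condition
    intro a
    by_cases ha : a = j
    · refine ⟨0, fun p q hpq hc => ?_⟩
      dsimp only at hc
      subst ha
      by_cases h : (p = 0 ∧ q = 2) ∨ (p = 2 ∧ q = 0)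
      · rcases h with ⟨rfl, rfl⟩ | ⟨rfl, rfl⟩
        · exact Or.inl rfl
        · exact Or.inr rfl
      · rw [if_neg h] at hc
        exact absurd hc hij
    · refine ⟨1, fun p q hpq hc => ?_⟩
      dsimp only at hc
      by_cases h : (p = 0 ∧ q = 2) ∨ (p = 2 ∧ q = 0)
      · rw [if_pos h] at hc
        exact absurd hc.symm ha
      · -- p ≠ q, not the (0,2)/(2,0) pair, so p = 1 or q = 1
        fin_cases p <;> fin_cases q <;> simp_all

lemma pair_bound {n : ℕ} (A B : SimpleGraph (Fin n)) [DecidableRel A.Adj] [DecidableRel B.Adj]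
    (hAB : ∀ u v w, A.Adj u v → A.Adj v w → B.Adj u w → False)
    (hBA : ∀ u v w, B.Adj u v → B.Adj v w → A.Adj u w → False) :
    A.edgeFinset.card + B.edgeFinset.card ≤ 2 * (n ^ 2 / 4) := by
  haveI hU : DecidableRel (fun a b => A.Adj a b ∨ B.Adj a b) :=
    fun a b => inferInstanceAs (Decidable (_ ∨ _))
  haveI hD : DecidableRel (fun a b => A.Adj a b ∧ B.Adj a b) :=
    fun a b => inferInstanceAs (Decidable (_ ∧ _))
  have htri : ∀ u v w, (A.Adj u v ∧ B.Adj u v) → (A.Adj u w ∨ B.Adj u w) →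
      (A.Adj v w ∨ B.Adj v w) → False := by
    rintro u v w ⟨hA, hB⟩ (h2 | h2) (h3 | h3)
    · exact hAB u w v h2 h3.symm hB
    · exact hAB v u w hA.symm h2 h3
    · exact hBA v u w hB.symm h2 h3
    · exact hBA u w v h2 h3.symm hA
  have hkey := key (fun a b => A.Adj a b ∨ B.Adj a b) (fun a b => A.Adj a b ∧ B.Adj a b)
    (fun u v h => by rcases h with h | h; exacts [Or.inl h.symm, Or.inr h.symm])
    (fun u v h => ⟨h.1.symm, h.2.symm⟩)
    (fun u v h => Or.inl h.1)
    (fun u h => by rcases h with h | h; exacts [A.irrefl h, B.irrefl h])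
    htri univ
  rw [card_univ, Fintype.card_fin] at hkey
  calc A.edgeFinset.card + B.edgeFinset.card
      = (PO A.Adj univ).card + (PO B.Adj univ).card := by
        rw [po_card_edge, po_card_edge]
    _ = _ + _ := po_split A.Adj B.Adj
    _ ≤ 2 * (n ^ 2 / 4) := hkey


theorem stmt_16 {n s : ℕ} (hs : 2 ≤ s)
    (G : Fin s → SimpleGraph (Fin n)) [∀ i, DecidableRel (G i).Adj]
    (hfree : StarColoredCliqueFree 2 3 G) :
    ∑ i, (G i).edgeFinset.card ≤ s * (n ^ 2 / 4) := by
  set e : Fin s → ℕ := fun i => (G i).edgeFinset.card with he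
  set T : ℕ := ∑ i, e i with hT
  set B : ℕ := n ^ 2 / 4 with hB
  have hpair : ∀ i j, i ≠ j → e i + e j ≤ 2 * B := fun i j hij =>
    pair_bound (G i) (G j) (cherry G hfree i j hij) (cherry G hfree j i hij.symm)
  have h1 : ∀ i : Fin s, (∑ j ∈ univ.erase i, (e i + e j)) + 2 * e i = s * e i + T := by
    intro i
    have hadd := Finset.add_sum_erase univ (fun j => e i + e j) (mem_univ i)
    have h' : ∑ j, (e i + e j) = s * e i + T := by
      rw [Finset.sum_add_distrib, Finset.sum_const, card_univ, Fintype.card_fin, smul_eq_mul, hT]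
    omega
  have h2 : ∀ i : Fin s, (∑ j ∈ univ.erase i, (e i + e j)) ≤ (s - 1) * (2 * B) := by
    intro i
    calc ∑ j ∈ univ.erase i, (e i + e j) ≤ ∑ _j ∈ univ.erase i, 2 * B :=
          Finset.sum_le_sum (fun j hj => hpair i j (Ne.symm (mem_erase.mp hj).1))
      _ = (s - 1) * (2 * B) := by
          rw [Finset.sum_const, card_erase_of_mem (mem_univ i), card_univ, Fintype.card_fin,
            smul_eq_mul]
  have hsum1 : (∑ i, ((∑ j ∈ univ.erase i, (e i + e j)) + 2 * e i))
      = ∑ i, (s * e i + T) := Finset.sum_congr rfl (fun i _ => h1 i)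
  have hsum2 : (∑ i, ((∑ j ∈ univ.erase i, (e i + e j)) + 2 * e i))
      = (∑ i, ∑ j ∈ univ.erase i, (e i + e j)) + 2 * T := by
    rw [Finset.sum_add_distrib, ← Finset.mul_sum, hT]
  have hsum3 : ∑ i, (s * e i + T) = s * T + s * T := by
    rw [Finset.sum_add_distrib, ← Finset.mul_sum, Finset.sum_const, card_univ, Fintype.card_fin,
      smul_eq_mul, hT]
  have hsum4 : (∑ i, ∑ j ∈ univ.erase i, (e i + e j)) ≤ s * ((s - 1) * (2 * B)) := by
    calc (∑ i, ∑ j ∈ univ.erase i, (e i + e j)) ≤ ∑ _i : Fin s, (s - 1) * (2 * B) :=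
          Finset.sum_le_sum (fun i _ => h2 i)
      _ = s * ((s - 1) * (2 * B)) := by
          rw [Finset.sum_const, card_univ, Fintype.card_fin, smul_eq_mul]
  have hs1 : s - 1 + 1 = s := by omega
  have hY : 2 * (s - 1) * T + 2 * T = s * T + s * T := by
    calc 2 * (s - 1) * T + 2 * T = 2 * ((s - 1) + 1) * T := by ring
      _ = s * T + s * T := by rw [hs1]; ring
  have hmain : 2 * (s - 1) * T ≤ 2 * (s - 1) * (s * B) := by
    have hX : (∑ i, ∑ j ∈ univ.erase i, (e i + e j)) + 2 * T = s * T + s * T := by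
      rw [← hsum3, ← hsum1, hsum2]
    have hre : s * ((s - 1) * (2 * B)) = 2 * (s - 1) * (s * B) := by ring
    omega
  exact Nat.le_of_mul_le_mul_left hmain (by omega)
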